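/- Let E ⊆ ℝⁿ have σ-finite (n-1)-dimensional Hausdorff measure and let γ be a non-constant rectifiable path in ℝⁿ. Then for Lebesgue-almost every x ∈ ℝⁿ, the set E ∩ |γ + x| is finite or countable. -/

import Mathlib

open MeasureTheory Set
open scoped ENNReal

/-- A rectifiable curve in `ℝⁿ`, given by its arclength parametrization on `[0, len]`. -/
structure RectCurve (n : ℕ) where
  len : ℝ
  len_nonneg : 0 ≤ len
  toFun : ℝ → EuclideanSpace ℝ (Fin n)
  arclength : ∀ t ∈ Set.Icc 0 len, eVariationOn toFun (Set.Icc 0 t) = ENNReal.ofReal t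

/-- The line integral `∫_γ ρ ds` of a Borel function over a rectifiable curve
(via its arclength parametrization). -/
noncomputable def lineIntegral {n : ℕ} (ρ : EuclideanSpace ℝ (Fin n) → ℝ≥0∞)
    (γ : RectCurve n) : ℝ≥0∞ :=
  ∫⁻ t in Set.Icc 0 γ.len, ρ (γ.toFun t)

/-- A Borel function `ρ ≥ 0` is admissible for a curve family `Γ` if `∫_γ ρ ds ≥ 1`
for every `γ ∈ Γ`. -/
def Admissible {n : ℕ} (ρ : EuclideanSpace ℝ (Fin n) → ℝ≥0∞) (Γ : Set (RectCurve n)) : Prop :=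
  Measurable ρ ∧ ∀ γ ∈ Γ, 1 ≤ lineIntegral ρ γ

/-- The `p`-modulus of a curve family: `inf ∫ ρᵖ` over admissible `ρ`. -/
noncomputable def modulus {n : ℕ} (p : ℝ) (Γ : Set (RectCurve n)) : ℝ≥0∞ :=
  ⨅ (ρ : EuclideanSpace ℝ (Fin n) → ℝ≥0∞) (_ : Admissible ρ Γ), ∫⁻ x, ρ x ^ p

lemma rectCurve_dist_le {n : ℕ} (γ : RectCurve n) {s t : ℝ}
    (hs : s ∈ Set.Icc 0 γ.len) (ht : t ∈ Set.Icc 0 γ.len) :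
    dist (γ.toFun s) (γ.toFun t) ≤ |s - t| := by
  wlog h : s ≤ t generalizing s t
  · rw [dist_comm, abs_sub_comm]; exact this ht hs (le_of_not_ge h)
  have h3 := eVariationOn.Icc_add_Icc γ.toFun (s := (Set.univ : Set ℝ)) hs.1 h (Set.mem_univ s)
  simp only [Set.univ_inter] at h3
  rw [γ.arclength s hs, γ.arclength t ht] at h3
  have key : eVariationOn γ.toFun (Set.Icc s t) = ENNReal.ofReal (t - s) := by
    have := ENNReal.eq_sub_of_add_eq (ENNReal.ofReal_ne_top)
      ((add_comm _ _).trans h3)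
    rw [this, ENNReal.ofReal_sub _ hs.1]
  have h4 := eVariationOn.edist_le γ.toFun (Set.left_mem_Icc.2 h) (Set.right_mem_Icc.2 h)
  rw [key, edist_le_ofReal (by linarith)] at h4
  rwa [abs_sub_comm, abs_of_nonneg (by linarith)]

lemma exists_cover {X : Type*} [EMetricSpace X] [MeasurableSpace X] [BorelSpace X]
    (d : ℝ) (E : Set X) (hE : μH[d] E ≠ ⊤) {r : ℝ≥0∞} (hr : 0 < r) :
    ∃ t : ℕ → Set X, (E ⊆ ⋃ j, t j) ∧ (∀ j, EMetric.diam (t j) ≤ r) ∧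
      (∑' j, ⨆ _ : (t j).Nonempty, EMetric.diam (t j) ^ d) ≤ μH[d] E + 1 := by
  have h1 : (⨅ (t : ℕ → Set X) (_ : E ⊆ ⋃ n, t n) (_ : ∀ n, EMetric.diam (t n) ≤ r),
      ∑' n, ⨆ _ : (t n).Nonempty, EMetric.diam (t n) ^ d) ≤ μH[d] E := by
    rw [MeasureTheory.Measure.hausdorffMeasure_apply]
    exact le_iSup₂ (f := fun (r' : ℝ≥0∞) (_ : 0 < r') =>
      ⨅ (t : ℕ → Set X) (_ : E ⊆ ⋃ n, t n) (_ : ∀ n, EMetric.diam (t n) ≤ r'),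
        ∑' n, ⨆ _ : (t n).Nonempty, EMetric.diam (t n) ^ d) r hr
  have h2 := h1.trans_lt (ENNReal.lt_add_right hE one_ne_zero)
  simp only [iInf_lt_iff] at h2
  obtain ⟨t, hcov, hmesh, hsum⟩ := h2
  exact ⟨t, hcov, hmesh, hsum.le⟩

lemma two_pow_bound {a b : ℝ} (ha : 0 ≤ a) (hb : 0 ≤ b) (k : ℕ) :
    (a + b) ^ k ≤ 2 ^ k * (a ^ k + b ^ k) := by
  have h2 : (0:ℝ) ≤ max a b := le_trans ha (le_max_left _ _)
  have h1 : a + b ≤ 2 * max a b := by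
    rcases le_total a b with h | h
    · rw [max_eq_right h]; linarith
    · rw [max_eq_left h]; linarith
  calc (a+b)^k ≤ (2 * max a b)^k := pow_le_pow_left₀ (by linarith) h1 k
    _ = 2^k * (max a b)^k := mul_pow 2 _ k
    _ ≤ 2^k * (a^k + b^k) := by
        have : (max a b)^k ≤ a^k + b^k := by
          rcases le_total a b with h | h
          · rw [max_eq_right h]; have := pow_nonneg ha k; linarith
          · rw [max_eq_left h]; have := pow_nonneg hb k; linarith
        have h2k : (0:ℝ) ≤ 2^k := by positivity
        nlinarith

lemma key_cover {n : ℕ} (hn : 1 ≤ n) (E : Set (EuclideanSpace ℝ (Fin n)))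
    (hE : μH[(n : ℝ) - 1] E ≠ ⊤) (γ : RectCurve n) :
    ∃ B : ℝ≥0∞, B ≠ ⊤ ∧ ∀ δ : ℝ, 0 < δ → δ ≤ 1/2 →
      ∃ (t U : ℕ → Set (EuclideanSpace ℝ (Fin n))),
        (E ⊆ ⋃ j, t j) ∧
        (∀ j, ∀ y ∈ t j, ∀ z ∈ t j, dist y z ≤ δ) ∧
        (∀ j, MeasurableSet (U j)) ∧
        (∑' j, volume (U j)) ≤ B ∧
        (∀ j (y x : EuclideanSpace ℝ (Fin n)) (s : ℝ), y ∈ t j → s ∈ Set.Icc 0 γ.len →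
          γ.toFun s + x = y → x ∈ U j) := by
  classical
  set L := γ.len with hLdef
  have hL : 0 ≤ L := γ.len_nonneg
  set d : ℝ := (n:ℝ) - 1 with hddef
  set km : ℕ := n - 1 with hkm
  have hdk : ((km:ℝ)) = d := by
    rw [hkm, hddef, Nat.cast_sub hn]; norm_num
  have hnk : n = km + 1 := (Nat.succ_pred_eq_of_pos hn).symm
  set V : ℝ≥0∞ := volume (Metric.ball (0 : EuclideanSpace ℝ (Fin n)) 1) with hV
  have hVtop : V ≠ ⊤ := measure_ball_lt_top.ne
  set H : ℝ≥0∞ := μH[d] E with hH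
  refine ⟨ENNReal.ofReal ((L+1) * 2^n) * V * (ENNReal.ofReal ((2:ℝ)^km) * (2 * H + 3)), ?_, ?_⟩
  · refine ENNReal.mul_ne_top (ENNReal.mul_ne_top ENNReal.ofReal_ne_top hVtop)
      (ENNReal.mul_ne_top ENNReal.ofReal_ne_top ?_)
    exact ENNReal.add_ne_top.2 ⟨ENNReal.mul_ne_top (by simp) hE, by simp⟩
  intro δ hδ hδ2
  obtain ⟨t, hcov, hmesh, hsum⟩ := exists_cover d E hE (r := ENNReal.ofReal δ)
    (ENNReal.ofReal_pos.2 hδ)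
  have hdiam_ne_top : ∀ j, EMetric.diam (t j) ≠ ⊤ :=
    fun j => ((hmesh j).trans_lt ENNReal.ofReal_lt_top).ne
  set D : ℕ → ℝ := fun j => (EMetric.diam (t j)).toReal with hD
  have hD0 : ∀ j, 0 ≤ D j := fun j => ENNReal.toReal_nonneg
  have hDδ : ∀ j, D j ≤ δ := by
    intro j
    have := ENNReal.toReal_mono ENNReal.ofReal_ne_top (hmesh j)
    rwa [ENNReal.toReal_ofReal hδ.le] at this
  set ε : ℕ → ℝ := fun j => δ/2 * (1/2)^j with hε
  have hε0 : ∀ j, 0 < ε j := fun j => by positivity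
  have hεδ : ∀ j, ε j ≤ δ/2 := by
    intro j
    have h1 : ((1:ℝ)/2)^j ≤ 1 := pow_le_one₀ (by norm_num) (by norm_num)
    calc ε j = δ/2 * (1/2)^j := rfl
      _ ≤ δ/2 * 1 := by nlinarith
      _ = δ/2 := mul_one _
  set rr : ℕ → ℝ := fun j => D j + ε j with hrr
  have hrr0 : ∀ j, 0 < rr j := fun j => add_pos_of_nonneg_of_pos (hD0 j) (hε0 j)
  have hrr1 : ∀ j, rr j ≤ 1 := fun j => by
    have := hDδ j; have := hεδ j; simp only [hrr]; linarith
  set e : ℕ → EuclideanSpace ℝ (Fin n) := fun j => if h : (t j).Nonempty then h.some else 0 with he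
  set M : ℕ → ℕ := fun j => ⌊L / rr j⌋₊ with hM
  set U : ℕ → Set (EuclideanSpace ℝ (Fin n)) := fun j => if (t j).Nonempty then
      ⋃ i ∈ Finset.range (M j + 1), Metric.closedBall (e j - γ.toFun (i * rr j)) (2 * rr j)
    else ∅ with hU
  refine ⟨t, U, hcov, ?_, ?_, ?_, ?_⟩
  · -- mesh in dist
    intro j y hy z hz
    have h1 : edist y z ≤ ENNReal.ofReal δ := (EMetric.edist_le_diam_of_mem hy hz).trans (hmesh j)
    exact (edist_le_ofReal hδ.le).1 h1
  · -- measurability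
    intro j
    simp only [hU]
    split
    · exact MeasurableSet.biUnion (Finset.range (M j + 1)).countable_toSet
        (fun i _ => measurableSet_closedBall)
    · exact MeasurableSet.empty
  · -- the sum bound
    have hUvol : ∀ j, volume (U j) ≤ ENNReal.ofReal ((L+1) * 2^n) * V *
        (if (t j).Nonempty then ENNReal.ofReal (rr j ^ km) else 0) := by
      intro j
      by_cases hne : (t j).Nonempty
      · simp only [hU, if_pos hne]
        calc volume (⋃ i ∈ Finset.range (M j + 1),
              Metric.closedBall (e j - γ.toFun (i * rr j)) (2 * rr j))
            ≤ ∑ i ∈ Finset.range (M j + 1),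
              volume (Metric.closedBall (e j - γ.toFun (i * rr j)) (2 * rr j)) :=
              measure_biUnion_finset_le _ _
          _ = ∑ i ∈ Finset.range (M j + 1), ENNReal.ofReal ((2 * rr j)^n) * V := by
              refine Finset.sum_congr rfl fun i _ => ?_
              rw [Measure.addHaar_closedBall _ _ (by have := hrr0 j; positivity)]
              rw [finrank_euclideanSpace_fin]
          _ = (M j + 1 : ℕ) * (ENNReal.ofReal ((2 * rr j)^n) * V) := by
              rw [Finset.sum_const, Finset.card_range, nsmul_eq_mul]
          _ ≤ ENNReal.ofReal (L / rr j + 1) * (ENNReal.ofReal ((2 * rr j)^n) * V) := by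
              refine mul_le_mul_left ?_ _
              rw [← ENNReal.ofReal_natCast]
              apply ENNReal.ofReal_le_ofReal
              push_cast
              have : (M j : ℝ) ≤ L / rr j := Nat.floor_le (div_nonneg hL (hrr0 j).le)
              linarith
          _ = ENNReal.ofReal ((L / rr j + 1) * (2 * rr j)^n) * V := by
              rw [ENNReal.ofReal_mul (by have := hrr0 j; positivity), mul_assoc]
          _ ≤ ENNReal.ofReal ((L+1) * 2^n * rr j ^ km) * V := by
              refine mul_le_mul_left (ENNReal.ofReal_le_ofReal ?_) _
              have hr0 := hrr0 j
              have hr1 := hrr1 j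
              have e1 : rr j ^ n = rr j * rr j ^ km := by rw [hnk, pow_succ']
              have e2 : (L / rr j + 1) * (2 * rr j)^n = 2^n * (L * rr j ^ km + rr j ^ n) := by
                rw [mul_pow, e1]; field_simp
              have e3 : rr j ^ n ≤ rr j ^ km := pow_le_pow_of_le_one hr0.le hr1
                (by omega)
              have h2n : (0:ℝ) < 2^n := by positivity
              rw [e2]
              have hpk : (0:ℝ) ≤ rr j ^ km := by positivity
              nlinarith
          _ = ENNReal.ofReal ((L+1) * 2^n) * V * ENNReal.ofReal (rr j ^ km) := by
              rw [ENNReal.ofReal_mul (by positivity)]; ring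
      · simp [hU, if_neg hne]
    calc ∑' j, volume (U j)
        ≤ ∑' j, (ENNReal.ofReal ((L+1) * 2^n) * V *
            (if (t j).Nonempty then ENNReal.ofReal (rr j ^ km) else 0)) :=
          ENNReal.tsum_le_tsum hUvol
      _ = ENNReal.ofReal ((L+1) * 2^n) * V *
            ∑' j, (if (t j).Nonempty then ENNReal.ofReal (rr j ^ km) else 0) :=
          ENNReal.tsum_mul_left
      _ ≤ ENNReal.ofReal ((L+1) * 2^n) * V * (ENNReal.ofReal ((2:ℝ)^km) * (2 * H + 3)) := by
          gcongr
          -- inner sum bound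
          set A : ℕ → ℝ≥0∞ := fun j => ⨆ _ : (t j).Nonempty, EMetric.diam (t j) ^ d with hA
          have hAsum : ∑' j, A j ≤ H + 1 := hsum
          have hεsum : ∑' j, ENNReal.ofReal (ε j) ≤ 1 := by
            have hsm : Summable ε := by
              have : Summable (fun j : ℕ => ((1:ℝ)/2)^j) := summable_geometric_two
              simpa [hε] using this.mul_left (δ/2)
            rw [← ENNReal.ofReal_tsum_of_nonneg (fun j => (hε0 j).le) hsm]
            have : ∑' j, ε j = δ/2 * 2 := by
              rw [hε, tsum_mul_left, tsum_geometric_two]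
            rw [this]
            apply ENNReal.ofReal_le_one.2
            linarith
          have hper : ∀ j, (if (t j).Nonempty then ENNReal.ofReal (rr j ^ km) else 0) ≤
              ENNReal.ofReal ((2:ℝ)^km) * (A j + (A j + ENNReal.ofReal (ε j))) := by
            intro j
            by_cases hne : (t j).Nonempty
            · rw [if_pos hne]
              have hAj : A j = EMetric.diam (t j) ^ d := by
                rw [hA]; exact ciSup_pos hne
              have hDpow : ENNReal.ofReal (D j ^ km) = EMetric.diam (t j) ^ d := by
                rw [ENNReal.ofReal_pow (hD0 j)]
                simp only [hD]
                rw [ENNReal.ofReal_toReal (hdiam_ne_top j), ← hdk, ENNReal.rpow_natCast]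
              have hεpow : ENNReal.ofReal (ε j ^ km) ≤
                  EMetric.diam (t j) ^ d + ENNReal.ofReal (ε j) := by
                rcases Nat.eq_zero_or_pos km with hk0 | hk1
                · rw [hk0, pow_zero, ← hdk, hk0]
                  simp [ENNReal.rpow_natCast]
                · have hε1 : ε j ≤ 1 := by have := hεδ j; linarith
                  have : ε j ^ km ≤ ε j := pow_le_of_le_one (hε0 j).le hε1 (by omega)
                  calc ENNReal.ofReal (ε j ^ km) ≤ ENNReal.ofReal (ε j) :=
                        ENNReal.ofReal_le_ofReal this
                    _ ≤ _ := le_add_self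
              calc ENNReal.ofReal (rr j ^ km)
                  ≤ ENNReal.ofReal (2^km * (D j ^ km + ε j ^ km)) :=
                    ENNReal.ofReal_le_ofReal (two_pow_bound (hD0 j) (hε0 j).le km)
                _ = ENNReal.ofReal ((2:ℝ)^km) *
                    (ENNReal.ofReal (D j ^ km) + ENNReal.ofReal (ε j ^ km)) := by
                    rw [ENNReal.ofReal_mul (by positivity),
                      ENNReal.ofReal_add (by positivity) (by positivity)]
                _ ≤ ENNReal.ofReal ((2:ℝ)^km) * (A j + (A j + ENNReal.ofReal (ε j))) := by
                    gcongr
                    · rw [hDpow, hAj]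
                    · rw [hAj]; exact hεpow
            · rw [if_neg hne]; exact zero_le
          calc ∑' j, (if (t j).Nonempty then ENNReal.ofReal (rr j ^ km) else 0)
              ≤ ∑' j, (ENNReal.ofReal ((2:ℝ)^km) * (A j + (A j + ENNReal.ofReal (ε j)))) :=
                ENNReal.tsum_le_tsum hper
            _ = ENNReal.ofReal ((2:ℝ)^km) *
                ((∑' j, A j) + ((∑' j, A j) + ∑' j, ENNReal.ofReal (ε j))) := by
                rw [ENNReal.tsum_mul_left, ENNReal.tsum_add, ENNReal.tsum_add]
            _ ≤ ENNReal.ofReal ((2:ℝ)^km) * ((H + 1) + ((H + 1) + 1)) := by gcongr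
            _ = ENNReal.ofReal ((2:ℝ)^km) * (2 * H + 3) := by ring_nf
  · -- membership
    intro j y x s hyt hs hsx
    have hne : (t j).Nonempty := ⟨y, hyt⟩
    have hej : e j ∈ t j := by
      simp only [he, dif_pos hne]; exact hne.some_mem
    have hr0 := hrr0 j
    set kk : ℕ := ⌊s / rr j⌋₊ with hkk
    have hkM : kk ≤ M j := Nat.floor_le_floor (by gcongr; exact hs.2)
    have hks : (kk:ℝ) * rr j ≤ s := by
      have h1 : (kk:ℝ) ≤ s / rr j := Nat.floor_le (div_nonneg hs.1 hr0.le)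
      calc (kk:ℝ) * rr j ≤ (s / rr j) * rr j := by gcongr
        _ = s := div_mul_cancel₀ s hr0.ne'
    have hsk : s - kk * rr j < rr j := by
      have h1 : s / rr j < kk + 1 := Nat.lt_floor_add_one (s / rr j)
      have h2 : s < (kk + 1) * rr j := by
        rw [← div_lt_iff₀ hr0] at *; linarith [h1]
      linarith
    have hkmem : (kk:ℝ) * rr j ∈ Set.Icc (0:ℝ) L := ⟨by positivity, hks.trans hs.2⟩
    have hx : x = y - γ.toFun s := eq_sub_of_add_eq' hsx
    have hdy : dist y (e j) ≤ D j := by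
      rw [dist_edist]
      exact ENNReal.toReal_mono (hdiam_ne_top j) (EMetric.edist_le_diam_of_mem hyt hej)
    have hdγ : dist (γ.toFun s) (γ.toFun ((kk:ℝ) * rr j)) ≤ rr j := by
      refine (rectCurve_dist_le γ hs hkmem).trans ?_
      rw [abs_of_nonneg (by linarith)]
      linarith
    have hdist : dist x (e j - γ.toFun ((kk:ℝ) * rr j)) ≤ 2 * rr j := by
      rw [hx]
      calc dist (y - γ.toFun s) (e j - γ.toFun ((kk:ℝ) * rr j))
          ≤ dist y (e j) + dist (γ.toFun s) (γ.toFun ((kk:ℝ) * rr j)) := dist_sub_sub_le _ _ _ _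
        _ ≤ D j + rr j := add_le_add hdy hdγ
        _ ≤ 2 * rr j := by have := hε0 j; simp only [hrr]; linarith
    simp only [hU, if_pos hne]
    refine Set.mem_biUnion (Finset.mem_range.2 (Nat.lt_succ_of_le hkM)) ?_
    exact Metric.mem_closedBall.2 hdist

lemma exists_sep {α : Type*} [MetricSpace α] {N : ℕ} (y : Fin N → α)
    (hy : Function.Injective y) :
    ∃ m : ℕ, ∀ a b : Fin N, a ≠ b → 1/(m+2 : ℝ) < dist (y a) (y b) := by
  classical
  set P : Finset (Fin N × Fin N) := Finset.univ.filter (fun p => p.1 ≠ p.2) with hP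
  rcases P.eq_empty_or_nonempty with hPe | hPne
  · refine ⟨0, fun a b hab => absurd ?_ (Finset.notMem_empty (a,b))⟩
    rw [← hPe]
    exact Finset.mem_filter.2 ⟨Finset.mem_univ _, hab⟩
  · have hcpos : 0 < P.inf' hPne (fun p => dist (y p.1) (y p.2)) := by
      rw [Finset.lt_inf'_iff]
      intro p hp
      exact dist_pos.2 fun h => (Finset.mem_filter.1 hp).2 (hy h)
    obtain ⟨m, hm⟩ := exists_nat_one_div_lt hcpos
    refine ⟨m, fun a b hab => ?_⟩
    have hmemP : (a, b) ∈ P := Finset.mem_filter.2 ⟨Finset.mem_univ _, hab⟩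
    have h1 := Finset.inf'_le (fun p : Fin N × Fin N => dist (y p.1) (y p.2)) hmemP
    simp only [] at h1
    have h2 : 1/(m+2:ℝ) ≤ 1/(m+1:ℝ) := by
      apply one_div_le_one_div_of_le
      · positivity
      · linarith
    calc 1/(m+2:ℝ) ≤ 1/(m+1:ℝ) := h2
      _ < P.inf' hPne (fun p => dist (y p.1) (y p.2)) := hm
      _ ≤ dist (y a) (y b) := h1

lemma main_single {n : ℕ} (hn : 1 ≤ n) (E : Set (EuclideanSpace ℝ (Fin n)))
    (hE : μH[(n : ℝ) - 1] E ≠ ⊤) (γ : RectCurve n) :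
    volume {x : EuclideanSpace ℝ (Fin n) |
      ¬ (E ∩ (fun t => γ.toFun t + x) '' Set.Icc 0 γ.len).Countable} = 0 := by
  classical
  obtain ⟨B, hB, hkey⟩ := key_cover hn E hE γ
  set im : EuclideanSpace ℝ (Fin n) → Set (EuclideanSpace ℝ (Fin n)) :=
    fun x => (fun t => γ.toFun t + x) '' Set.Icc 0 γ.len with him
  set S : ℕ → ℕ → Set (EuclideanSpace ℝ (Fin n)) := fun N m =>
    {x | ∃ y : Fin N → EuclideanSpace ℝ (Fin n), (∀ a, y a ∈ E ∩ im x) ∧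
      ∀ a b : Fin N, a ≠ b → 1/(m+2 : ℝ) < dist (y a) (y b)} with hS
  have hmono : ∀ N, Monotone (S N) := by
    intro N
    apply monotone_nat_of_le_succ
    rintro m x ⟨y, h1, h2⟩
    refine ⟨y, h1, fun a b hab => lt_of_le_of_lt ?_ (h2 a b hab)⟩
    apply one_div_le_one_div_of_le
    · positivity
    · push_cast; linarith
  have hbound : ∀ N m : ℕ, 1 ≤ N → volume (S N m) ≤ B / N := by
    intro N m hN
    obtain ⟨t, U, hcov, hmesh, hUmeas, hUsum, hUmem⟩ := hkey (1/(m+2))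
      (by positivity)
      (by
        apply one_div_le_one_div_of_le
        · norm_num
        · push_cast; linarith [Nat.cast_nonneg (α := ℝ) m])
    set g : EuclideanSpace ℝ (Fin n) → ℝ≥0∞ :=
      fun x => ∑' j, (U j).indicator (1 : EuclideanSpace ℝ (Fin n) → ℝ≥0∞) x with hg
    have hgmeas : Measurable g :=
      Measurable.ennreal_tsum fun j => measurable_one.indicator (hUmeas j)
    have hgint : ∫⁻ x, g x = ∑' j, volume (U j) := by
      rw [lintegral_tsum (fun j => (measurable_one.indicator (hUmeas j)).aemeasurable)]
      refine tsum_congr fun j => ?_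
      rw [lintegral_indicator (hUmeas j)]
      exact setLIntegral_one _
    have hsub2 : S N m ⊆ {x | (N : ℝ≥0∞) ≤ g x} := by
      rintro x ⟨y, hy, hsep⟩
      have hj : ∀ a, ∃ j, y a ∈ t j := fun a => Set.mem_iUnion.1 (hcov (hy a).1)
      choose jm hjm using hj
      have hinj : Function.Injective jm := by
        intro a b hab
        by_contra hne
        have h2 : dist (y a) (y b) ≤ 1/(m+2:ℝ) :=
          hmesh (jm a) _ (hjm a) _ (hab ▸ hjm b)
        linarith [hsep a b hne]
      have hxU : ∀ a, x ∈ U (jm a) := by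
        intro a
        obtain ⟨s, hs, hsx⟩ := (hy a).2
        exact hUmem (jm a) (y a) x s (hjm a) hs hsx
      have hcard : (Finset.univ.image jm).card = N := by
        rw [Finset.card_image_of_injective _ hinj, Finset.card_univ, Fintype.card_fin]
      show (N : ℝ≥0∞) ≤ g x
      calc (N:ℝ≥0∞) = ∑ j ∈ Finset.univ.image jm, 1 := by
            rw [Finset.sum_const, hcard, nsmul_eq_mul, mul_one]
        _ = ∑ j ∈ Finset.univ.image jm,
            (U j).indicator (1 : EuclideanSpace ℝ (Fin n) → ℝ≥0∞) x := by
            refine Finset.sum_congr rfl fun j hjmem => ?_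
            obtain ⟨a, -, rfl⟩ := Finset.mem_image.1 hjmem
            rw [Set.indicator_of_mem (hxU a)]
            rfl
        _ ≤ ∑' j, (U j).indicator (1 : EuclideanSpace ℝ (Fin n) → ℝ≥0∞) x :=
            ENNReal.sum_le_tsum _
    calc volume (S N m) ≤ volume {x | (N : ℝ≥0∞) ≤ g x} := measure_mono hsub2
      _ ≤ (∫⁻ x, g x) / N := meas_ge_le_lintegral_div hgmeas.aemeasurable
            (Nat.cast_ne_zero.2 (by omega)) (ENNReal.natCast_ne_top N)
      _ ≤ B / N := by rw [hgint]; exact ENNReal.div_le_div_right hUsum _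
  have hsub : ∀ N : ℕ, {x | ¬ (E ∩ im x).Countable} ⊆ ⋃ m, S N m := by
    intro N x hx
    have hinf : (E ∩ im x).Infinite := fun hfin => hx hfin.countable
    obtain ⟨F, hFsub, hFcard⟩ := hinf.exists_subset_card_eq N
    set y : Fin N → EuclideanSpace ℝ (Fin n) :=
      fun a => ((F.equivFinOfCardEq hFcard).symm a : EuclideanSpace ℝ (Fin n)) with hy
    have hyinj : Function.Injective y := fun a b h =>
      (F.equivFinOfCardEq hFcard).symm.injective (Subtype.coe_injective h)
    have hymem : ∀ a, y a ∈ E ∩ im x := fun a =>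
      hFsub ((F.equivFinOfCardEq hFcard).symm a).2
    obtain ⟨m, hm⟩ := exists_sep y hyinj
    exact Set.mem_iUnion.2 ⟨m, y, hymem, hm⟩
  have key : ∀ N : ℕ, 1 ≤ N → volume {x | ¬ (E ∩ im x).Countable} ≤ B / N := by
    intro N hN
    calc volume {x | ¬ (E ∩ im x).Countable} ≤ volume (⋃ m, S N m) :=
          measure_mono (hsub N)
      _ = ⨆ m, volume (S N m) := Directed.measure_iUnion ((hmono N).directed_le)
      _ ≤ B / N := iSup_le fun m => hbound N m hN
  by_contra h
  have hμ0 : volume {x | ¬ (E ∩ im x).Countable} ≠ 0 := h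
  obtain ⟨N, hN⟩ := ENNReal.exists_nat_gt (ENNReal.div_lt_top hB hμ0).ne
  have h2 := (ENNReal.le_div_iff_mul_le (Or.inl (Nat.cast_ne_zero.2 (by omega : N + 1 ≠ 0)))
    (Or.inl (ENNReal.natCast_ne_top (N+1)))).1 (key (N+1) (by omega))
  have h3 : B / volume {x | ¬ (E ∩ im x).Countable} < ((N+1 : ℕ) : ℝ≥0∞) := by
    refine hN.trans_le ?_
    exact_mod_cast Nat.le_succ N
  have h4 : B < ((N+1:ℕ) : ℝ≥0∞) * volume {x | ¬ (E ∩ im x).Countable} :=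
    (ENNReal.div_lt_iff (Or.inl hμ0) (Or.inr hB)).1 h3
  rw [mul_comm] at h4
  exact absurd h2 (not_le.2 h4)

/-- If `E ⊆ ℝⁿ` has σ-finite `(n-1)`-dimensional Hausdorff measure and `γ`
is a non-constant rectifiable path, then for a.e. `x ∈ ℝⁿ` the set `E ∩ |γ + x|` is
countable (finite or countably infinite). -/
theorem stmt_11 {n : ℕ} (E : Set (EuclideanSpace ℝ (Fin n)))
    (hE : ∃ F : ℕ → Set (EuclideanSpace ℝ (Fin n)),
      E = ⋃ i, F i ∧ ∀ i, μH[(n : ℝ) - 1] (F i) < ⊤)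
    (γ : RectCurve n) (hγ : 0 < γ.len) :
    ∀ᵐ x ∂(volume : Measure (EuclideanSpace ℝ (Fin n))),
      (E ∩ (fun t => γ.toFun t + x) '' Set.Icc 0 γ.len).Countable := by
  rcases Nat.eq_zero_or_pos n with hn0 | hn
  · subst hn0
    haveI : Subsingleton (EuclideanSpace ℝ (Fin 0)) :=
      ⟨fun a b => by ext i; exact i.elim0⟩
    filter_upwards with x
    exact Set.to_countable _
  obtain ⟨F, rfl, hF⟩ := hE
  rw [ae_iff]
  have hsub : {x : EuclideanSpace ℝ (Fin n) |
      ¬ ((⋃ i, F i) ∩ (fun t => γ.toFun t + x) '' Set.Icc 0 γ.len).Countable} ⊆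
      ⋃ i, {x | ¬ (F i ∩ (fun t => γ.toFun t + x) '' Set.Icc 0 γ.len).Countable} := by
    intro x hx
    by_contra hmem
    simp only [Set.mem_iUnion, not_exists, Set.mem_setOf_eq, not_not] at hmem
    apply hx
    rw [Set.iUnion_inter]
    exact Set.countable_iUnion hmem
  refine le_antisymm ?_ zero_le
  calc volume _ ≤ volume (⋃ i, {x : EuclideanSpace ℝ (Fin n) |
        ¬ (F i ∩ (fun t => γ.toFun t + x) '' Set.Icc 0 γ.len).Countable}) :=
        measure_mono hsub
    _ ≤ ∑' i, volume {x : EuclideanSpace ℝ (Fin n) |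
        ¬ (F i ∩ (fun t => γ.toFun t + x) '' Set.Icc 0 γ.len).Countable} :=
        measure_iUnion_le _
    _ = ∑' _ : ℕ, (0:ℝ≥0∞) :=
        tsum_congr fun i => main_single hn (F i) (hF i).ne γ
    _ = 0 := tsum_zero
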